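/- arXiv:2502.03503 — 2 statements merged into one kernel-verified Lean document; each statement's English description precedes it below -/
import Mathlib

section
/- (Asymptotic insensitivity of attention to prompt content.) Fix H ≥ 1 heads with parameters α₁, …, α_H ∈ ℝ and value vectors ζ₁, …, ζ_H ∈ ℝ^d, and fix p ≥ 1. Let (x₁, …, x_p) and (y₁, …, y_p) be two contexts of the same length p, with corresponding multi-head attention outputs Attn_x and Attn_y. Then the difference Attn_x(t) − Attn_y(t) converges to a constant vector of ℝ^d as t → +∞; in particular the asymptotic slope of the multi-head attention output does not depend on the context points. -/
open Filter Real
open scoped Classical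

/-- Denominator of the softmax attention: `D_α(x) = exp(α x²) + ∑ₖ exp(α x xₖ)`. -/
noncomputable def attnDenom (p : ℕ) (xs : Fin p → ℝ) (α : ℝ) (x : ℝ) : ℝ :=
  Real.exp (α * x ^ 2) + ∑ k, Real.exp (α * x * xs k)

/-- Single-head softmax attention output
`A_α(x) = (∑ⱼ xⱼ exp(α x xⱼ) + x exp(α x²)) / D_α(x)`. -/
noncomputable def attnOut (p : ℕ) (xs : Fin p → ℝ) (α : ℝ) (x : ℝ) : ℝ :=
  (∑ j, xs j * Real.exp (α * x * xs j) + x * Real.exp (α * x ^ 2)) / attnDenom p xs α x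

/-- Multi-head attention output `Attn(x) = ∑ₕ A_{αₕ}(x) • ζₕ` with values in ℝ^d. -/
noncomputable def multiAttn (p : ℕ) (xs : Fin p → ℝ) (H d : ℕ) (αs : Fin H → ℝ)
    (ζ : Fin H → EuclideanSpace ℝ (Fin d)) (x : ℝ) : EuclideanSpace ℝ (Fin d) :=
  ∑ h, attnOut p xs (αs h) x • ζ h

/-- Context-independent shift capturing the divergent part of a head. -/
noncomputable def headShift (p : ℕ) (α : ℝ) (t : ℝ) : ℝ :=
  if 0 < α then t else if α = 0 then t / (p + 1) else 0

lemma decay (c : ℝ) (hc : 0 < c) (a b : ℝ) :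
    Tendsto (fun t : ℝ => (a + b * t) * Real.exp (-(c * t))) atTop (nhds 0) := by
  have h1 : Tendsto (fun t : ℝ => c * t) atTop atTop :=
    Tendsto.const_mul_atTop hc tendsto_id
  have h2 : Tendsto (fun t : ℝ => Real.exp (-(c * t))) atTop (nhds 0) :=
    Real.tendsto_exp_atBot.comp (tendsto_neg_atBot_iff.mpr h1)
  have h3 : Tendsto (fun t : ℝ => (c * t) * Real.exp (-(c * t))) atTop (nhds 0) := by
    have := (Real.tendsto_pow_mul_exp_neg_atTop_nhds_zero 1).comp h1
    simpa [Function.comp_def] using this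
  have h4 := (h2.const_mul a).add (h3.const_mul (b / c))
  simp only [mul_zero, add_zero] at h4
  convert h4 using 2 with t
  field_simp

lemma attnDenom_pos (p : ℕ) (xs : Fin p → ℝ) (α t : ℝ) : 0 < attnDenom p xs α t := by
  rw [attnDenom]
  exact add_pos_of_pos_of_nonneg (Real.exp_pos _)
    (Finset.sum_nonneg fun _ _ => (Real.exp_pos _).le)

lemma head_lim (p : ℕ) (hp : 1 ≤ p) (xs : Fin p → ℝ) (α : ℝ) :
    ∃ L : ℝ, Tendsto (fun t => attnOut p xs α t - headShift p α t) atTop (nhds L) := by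
  rcases lt_trichotomy α 0 with hα | hα | hα
  · -- α < 0 : limit is min of the context
    obtain ⟨i, -, hmin⟩ := Finset.exists_min_image Finset.univ xs ⟨⟨0, hp⟩, Finset.mem_univ _⟩
    set m := xs i with hm
    have hShift : ∀ t : ℝ, headShift p α t = 0 := by
      intro t; simp [headShift, not_lt.mpr hα.le, hα.ne]
    set S := Finset.univ.filter (fun j => xs j = m) with hS
    have hScard : 0 < S.card := Finset.card_pos.mpr ⟨i, by simp [hS, hm]⟩
    have hN₀ : (0:ℝ) < (S.card : ℝ) := by exact_mod_cast hScard
    -- limits of the renormalized exponentials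
    have hg : ∀ j : Fin p, Tendsto (fun t : ℝ => Real.exp (α * (xs j - m) * t)) atTop
        (nhds (if xs j = m then 1 else 0)) := by
      intro j
      by_cases h : xs j = m
      · simpa [h] using (tendsto_const_nhds : Tendsto (fun _ : ℝ => (1:ℝ)) atTop (nhds 1))
      · have hlt : 0 < xs j - m :=
          sub_pos.mpr (lt_of_le_of_ne (hmin j (Finset.mem_univ _)) (Ne.symm h))
        simp only [h, if_false]
        have hpos : 0 < -(α * (xs j - m)) := by nlinarith
        have h1 : Tendsto (fun t : ℝ => α * (xs j - m) * t) atTop atBot := by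
          have := Tendsto.const_mul_atTop hpos (tendsto_id (α := ℝ) (x := atTop))
          have h2 := tendsto_neg_atBot_iff.mpr this
          refine h2.congr fun t => by simp only [id_eq]; ring
        exact Real.tendsto_exp_atBot.comp h1
    have hquad : Tendsto (fun t : ℝ => Real.exp (α * t * (t - m))) atTop (nhds 0) := by
      apply squeeze_zero_norm' ?_ (decay (-α) (by linarith) 1 0)
      filter_upwards [eventually_ge_atTop (max 0 (m + 1))] with t ht
      have ht0 : (0:ℝ) ≤ t := le_trans (le_max_left _ _) ht
      have htm : m + 1 ≤ t := le_trans (le_max_right _ _) ht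
      have key : α * t * (t - m) ≤ α * t := by
        nlinarith [mul_nonneg (mul_nonneg (neg_nonneg.mpr hα.le) ht0)
          (by linarith : (0:ℝ) ≤ t - m - 1)]
      have : -(-α * t) = α * t := by ring
      rw [Real.norm_eq_abs, Real.abs_exp, zero_mul, add_zero, one_mul, this]
      exact Real.exp_le_exp.mpr key
    have hquad' : Tendsto (fun t : ℝ => t * Real.exp (α * t * (t - m))) atTop (nhds 0) := by
      apply squeeze_zero_norm' ?_ (decay (-α) (by linarith) 0 1)
      filter_upwards [eventually_ge_atTop (max 0 (m + 1))] with t ht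
      have ht0 : (0:ℝ) ≤ t := le_trans (le_max_left _ _) ht
      have htm : m + 1 ≤ t := le_trans (le_max_right _ _) ht
      have key : α * t * (t - m) ≤ α * t := by
        nlinarith [mul_nonneg (mul_nonneg (neg_nonneg.mpr hα.le) ht0)
          (by linarith : (0:ℝ) ≤ t - m - 1)]
      have h2 : -(-α * t) = α * t := by ring
      rw [Real.norm_eq_abs, abs_mul, Real.abs_exp, abs_of_nonneg ht0, zero_add, one_mul, h2]
      exact mul_le_mul_of_nonneg_left (Real.exp_le_exp.mpr key) ht0
    -- rewrite attnOut in renormalized form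
    have key : ∀ t : ℝ, attnOut p xs α t =
        (∑ j, xs j * Real.exp (α * (xs j - m) * t) + t * Real.exp (α * t * (t - m))) /
        (Real.exp (α * t * (t - m)) + ∑ j, Real.exp (α * (xs j - m) * t)) := by
      intro t
      have he : Real.exp (-(α * t * m)) ≠ 0 := Real.exp_ne_zero _
      rw [attnOut, attnDenom, ← mul_div_mul_right _ _ he]
      congr 1
      · rw [add_mul, Finset.sum_mul]
        congr 1
        · refine Finset.sum_congr rfl fun j _ => ?_
          rw [mul_assoc, ← Real.exp_add]
          congr 1
          ring
        · rw [mul_assoc, ← Real.exp_add]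
          congr 2
          ring
      · rw [add_mul, Finset.sum_mul, ← Real.exp_add]
        congr 1
        · congr 1
          ring
        · refine Finset.sum_congr rfl fun j _ => ?_
          rw [← Real.exp_add]
          congr 1
          ring
    -- numerator limit
    have hsum1 : Tendsto (fun t : ℝ => ∑ j, xs j * Real.exp (α * (xs j - m) * t)) atTop
        (nhds (∑ j, xs j * (if xs j = m then 1 else 0))) :=
      tendsto_finset_sum _ fun j _ => (hg j).const_mul (xs j)
    have hval1 : (∑ j, xs j * (if xs j = m then (1:ℝ) else 0)) = m * S.card := by
      have h1 : ∀ j, xs j * (if xs j = m then (1:ℝ) else 0) = if xs j = m then m else 0 := by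
        intro j; by_cases h : xs j = m <;> simp [h]
      rw [Finset.sum_congr rfl fun j _ => h1 j, ← Finset.sum_filter, ← hS,
        Finset.sum_const, nsmul_eq_mul, mul_comm]
    have hnum : Tendsto (fun t : ℝ =>
        ∑ j, xs j * Real.exp (α * (xs j - m) * t) + t * Real.exp (α * t * (t - m)))
        atTop (nhds (m * S.card)) := by
      have := hsum1.add hquad'
      rw [hval1, add_zero] at this
      exact this
    have hsum2 : Tendsto (fun t : ℝ => ∑ j, Real.exp (α * (xs j - m) * t)) atTop
        (nhds (∑ j, if xs j = m then (1:ℝ) else 0)) :=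
      tendsto_finset_sum _ fun j _ => hg j
    have hval2 : (∑ j, if xs j = m then (1:ℝ) else 0) = (S.card : ℝ) := by
      rw [Finset.sum_boole, hS]
    have hden : Tendsto (fun t : ℝ =>
        Real.exp (α * t * (t - m)) + ∑ j, Real.exp (α * (xs j - m) * t)) atTop
        (nhds (S.card : ℝ)) := by
      have := hquad.add hsum2
      rw [hval2, zero_add] at this
      exact this
    refine ⟨m, ?_⟩
    have hfinal := hnum.div hden hN₀.ne'
    rw [mul_div_cancel_right₀ _ hN₀.ne'] at hfinal
    refine Tendsto.congr (fun t => ?_) hfinal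
    rw [hShift t, sub_zero, key t]
    rfl
  · -- α = 0
    subst hα
    refine ⟨(∑ j, xs j) / (p + 1), ?_⟩
    have heq : ∀ t : ℝ, attnOut p xs 0 t - headShift p 0 t = (∑ j, xs j) / (p + 1) := by
      intro t
      have hp1 : ((p:ℝ) + 1) ≠ 0 := by positivity
      simp only [attnOut, attnDenom, headShift, zero_mul, Real.exp_zero, mul_one,
        Finset.sum_const, Finset.card_univ, Fintype.card_fin, nsmul_eq_mul, lt_irrefl,
        if_false, if_pos rfl, if_true]
      field_simp
      ring
    exact Tendsto.congr (fun t => (heq t).symm) tendsto_const_nhds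
  · -- α > 0 : attnOut - t → 0
    refine ⟨0, ?_⟩
    have hShift : ∀ t : ℝ, headShift p α t = t := fun t => if_pos hα
    have key : ∀ t : ℝ, attnOut p xs α t - t =
        ∑ j, (xs j - t) * Real.exp (α * t * xs j) / attnDenom p xs α t := by
      intro t
      have hD := attnDenom_pos p xs α t
      rw [attnOut, div_sub' hD.ne', ← Finset.sum_div]
      congr 1
      rw [attnDenom]
      simp only [sub_mul, Finset.sum_sub_distrib, ← Finset.mul_sum]
      ring
    have hmain : Tendsto (fun t : ℝ =>
        ∑ j, (xs j - t) * Real.exp (α * t * xs j) / attnDenom p xs α t) atTop (nhds 0) := by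
      have : (0:ℝ) = ∑ _j : Fin p, (0:ℝ) := by simp
      rw [this]
      apply tendsto_finset_sum
      intro j _
      apply squeeze_zero_norm' ?_ (decay α hα |xs j| 1)
      filter_upwards [eventually_ge_atTop (max 0 (xs j + 1))] with t ht
      have ht0 : (0:ℝ) ≤ t := le_trans (le_max_left _ _) ht
      have hts : xs j + 1 ≤ t := le_trans (le_max_right _ _) ht
      have hD := attnDenom_pos p xs α t
      have hDe : Real.exp (α * t ^ 2) ≤ attnDenom p xs α t := by
        rw [attnDenom]
        exact le_add_of_nonneg_right (Finset.sum_nonneg fun _ _ => (Real.exp_pos _).le)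
      rw [Real.norm_eq_abs, abs_div, abs_mul, abs_of_pos hD, Real.abs_exp]
      calc |xs j - t| * Real.exp (α * t * xs j) / attnDenom p xs α t
          ≤ |xs j - t| * Real.exp (α * t * xs j) / Real.exp (α * t ^ 2) := by
            apply div_le_div_of_nonneg_left _ (Real.exp_pos _) hDe
            positivity
        _ = |xs j - t| * Real.exp (α * t * xs j - α * t ^ 2) := by
            rw [mul_div_assoc, ← Real.exp_sub]
        _ ≤ (|xs j| + 1 * t) * Real.exp (-(α * t)) := by
            apply mul_le_mul
            · rw [one_mul]
              calc |xs j - t| ≤ |xs j| + |t| := abs_sub _ _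
                _ = |xs j| + t := by rw [abs_of_nonneg ht0]
            · apply Real.exp_le_exp.mpr
              nlinarith [mul_nonneg (mul_nonneg hα.le ht0) (by linarith : (0:ℝ) ≤ t - xs j - 1)]
            · exact (Real.exp_pos _).le
            · positivity
    have := hmain
    rw [tendsto_congr fun t => (key t).symm] at this
    refine this.congr fun t => ?_
    rw [hShift]

theorem stmt_8 (p : ℕ) (hp : 1 ≤ p) (H d : ℕ) (hH : 1 ≤ H) (hd : 1 ≤ d)
    (αs : Fin H → ℝ) (ζ : Fin H → EuclideanSpace ℝ (Fin d))
    (xs ys : Fin p → ℝ) :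
    ∃ c : EuclideanSpace ℝ (Fin d),
      Filter.Tendsto (fun t : ℝ => multiAttn p xs H d αs ζ t - multiAttn p ys H d αs ζ t)
        Filter.atTop (nhds c) := by
  choose Lx hLx using fun h : Fin H => head_lim p hp xs (αs h)
  choose Ly hLy using fun h : Fin H => head_lim p hp ys (αs h)
  refine ⟨∑ h, (Lx h - Ly h) • ζ h, ?_⟩
  have heq : ∀ t : ℝ, multiAttn p xs H d αs ζ t - multiAttn p ys H d αs ζ t =
      ∑ h, ((attnOut p xs (αs h) t - headShift p (αs h) t) -
        (attnOut p ys (αs h) t - headShift p (αs h) t)) • ζ h := by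
    intro t
    rw [multiAttn, multiAttn, ← Finset.sum_sub_distrib]
    refine Finset.sum_congr rfl fun h _ => ?_
    rw [← sub_smul]
    congr 1
    ring
  rw [tendsto_congr heq]
  apply tendsto_finset_sum
  intro h _
  exact ((hLx h).sub (hLy h)).smul_const (ζ h)
end

section
/- (Failure to extrapolate linear targets without Layer Normalization.) Let the multi-head attention output be scalar-valued (d = 1), so Attn(x) = ∑_{h=1}^H A_{α_h}(x)·ζ_h with ζ_h ∈ ℝ, and set A = ∑_{h : α_h > 0} ζ_h + (1/(p+1))·∑_{h : α_h = 0} ζ_h. Then for every a ∈ ℝ with a ≠ A and every b ∈ ℝ, |Attn(x) − (a·x + b)| → +∞ as x → +∞; in particular, for every ε > 0 there exists x₀ ∈ ℝ such that |Attn(x) − (a·x + b)| > ε for all x ≥ x₀. -/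
open Filter Real
open scoped Classical

/-- Scalar multi-head attention output `Attn(x) = ∑ₕ A_{αₕ}(x) · ζₕ` (case d = 1). -/
noncomputable def multiAttnScalar (p : ℕ) (xs : Fin p → ℝ) (H : ℕ) (αs : Fin H → ℝ)
    (ζ : Fin H → ℝ) (x : ℝ) : ℝ :=
  ∑ h, attnOut p xs (αs h) x * ζ h

open scoped Topology

lemma denom_pos (p : ℕ) (xs : Fin p → ℝ) (α x : ℝ) : 0 < attnDenom p xs α x := by
  have : (0:ℝ) ≤ ∑ k, Real.exp (α * x * xs k) :=
    Finset.sum_nonneg fun k _ => (Real.exp_pos _).le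
  have := Real.exp_pos (α * x ^ 2)
  unfold attnDenom; linarith

lemma exp_le_denom (p : ℕ) (xs : Fin p → ℝ) (α x : ℝ) (j : Fin p) :
    Real.exp (α * x * xs j) ≤ attnDenom p xs α x := by
  have h := Finset.single_le_sum (f := fun k => Real.exp (α * x * xs k))
    (fun k _ => (Real.exp_pos _).le) (Finset.mem_univ j)
  have := Real.exp_pos (α * x ^ 2)
  unfold attnDenom; linarith

lemma exp_quad_tendsto (α c : ℝ) (hα : 0 < α) :
    Tendsto (fun x : ℝ => Real.exp (α * x * c - α * x ^ 2)) atTop (𝓝 0) := by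
  apply Real.tendsto_exp_atBot.comp
  apply tendsto_atBot_mono' atTop ?_ (tendsto_id.const_mul_atTop_of_neg (by linarith : -α < 0))
  filter_upwards [eventually_ge_atTop (c + 1), eventually_ge_atTop 0] with x hx hx0
  have h3 : 0 ≤ α * x := by positivity
  have h4 : (0:ℝ) ≤ x - c - 1 := by linarith
  simp only [id]
  nlinarith [mul_nonneg h3 h4]

lemma exp_neg_tendsto (α c : ℝ) (hα : α < 0) :
    Tendsto (fun x : ℝ => Real.exp (α * x * (x - c))) atTop (𝓝 0) := by
  apply Real.tendsto_exp_atBot.comp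
  apply tendsto_atBot_mono' atTop ?_ (tendsto_id.const_mul_atTop_of_neg hα)
  filter_upwards [eventually_ge_atTop (c + 1), eventually_ge_atTop 0] with x hx hx0
  have h3 : α * x ≤ 0 := mul_nonpos_of_nonpos_of_nonneg hα.le hx0
  have h4 : (0:ℝ) ≤ x - c - 1 := by linarith
  simp only [id]
  nlinarith [mul_nonpos_of_nonpos_of_nonneg h3 h4]

lemma head_pos (p : ℕ) (xs : Fin p → ℝ) (α : ℝ) (hα : 0 < α) :
    Tendsto (fun x => attnOut p xs α x / x) atTop (𝓝 1) := by
  have key : ∀ x : ℝ, attnOut p xs α x =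
      (∑ j, xs j * Real.exp (α * x * xs j - α * x ^ 2) + x) /
        (1 + ∑ k, Real.exp (α * x * xs k - α * x ^ 2)) := by
    intro x
    have hD := (denom_pos p xs α x).ne'
    have hE := Real.exp_ne_zero (α * x ^ 2)
    unfold attnOut attnDenom at *
    rw [div_eq_div_iff hD (by positivity)]
    simp only [Real.exp_sub, ← mul_div_assoc, ← Finset.sum_div]
    field_simp
    congr 1
    exact Finset.sum_congr rfl fun j _ => by congr 2; ring
  have hnum : Tendsto (fun x => ∑ j, xs j * Real.exp (α * x * xs j - α * x ^ 2)) atTop (𝓝 0) := by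
    have := tendsto_finset_sum (f := fun j (x : ℝ) => xs j * Real.exp (α * x * xs j - α * x ^ 2))
      Finset.univ (fun j _ => (exp_quad_tendsto α (xs j) hα).const_mul (xs j))
    simpa using this
  have hden : Tendsto (fun x => 1 + ∑ k, Real.exp (α * x * xs k - α * x ^ 2)) atTop (𝓝 1) := by
    have h := tendsto_finset_sum (f := fun k (x : ℝ) => Real.exp (α * x * xs k - α * x ^ 2))
      Finset.univ (fun k _ => exp_quad_tendsto α (xs k) hα)
    have := (tendsto_const_nhds (x := (1:ℝ)) (f := atTop)).add h
    simpa using this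
  have hmain : Tendsto (fun x => ((∑ j, xs j * Real.exp (α * x * xs j - α * x ^ 2)) * x⁻¹ + 1) /
      (1 + ∑ k, Real.exp (α * x * xs k - α * x ^ 2))) atTop (𝓝 1) := by
    have hn := (hnum.mul tendsto_inv_atTop_zero).add (tendsto_const_nhds (x := (1:ℝ)) (f := atTop))
    have := hn.div hden (by norm_num)
    simp only [mul_zero, zero_add, div_one] at this
    exact this
  apply Tendsto.congr' _ hmain
  filter_upwards [eventually_gt_atTop 0] with x hx
  have hd : (0:ℝ) < 1 + ∑ k, Real.exp (α * x * xs k - α * x ^ 2) := by positivity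
  rw [key x, div_div, div_eq_div_iff hd.ne' (by positivity)]
  field_simp

lemma head_zero (p : ℕ) (xs : Fin p → ℝ) :
    Tendsto (fun x => attnOut p xs 0 x / x) atTop (𝓝 ((p:ℝ)+1)⁻¹) := by
  have key : ∀ x : ℝ, attnOut p xs 0 x = ((∑ j, xs j) + x) / ((p:ℝ) + 1) := by
    intro x
    unfold attnOut attnDenom
    simp [zero_mul]
    ring_nf
  have hmain : Tendsto (fun x : ℝ => (∑ j, xs j) / ((p:ℝ)+1) * x⁻¹ + ((p:ℝ)+1)⁻¹) atTop
      (𝓝 (((p:ℝ)+1)⁻¹)) := by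
    have := (tendsto_inv_atTop_zero.const_mul ((∑ j, xs j) / ((p:ℝ)+1))).add
      (tendsto_const_nhds (x := ((p:ℝ)+1)⁻¹) (f := atTop))
    simpa using this
  apply Tendsto.congr' _ hmain
  filter_upwards [eventually_gt_atTop 0] with x hx
  rw [key x]
  have hp1 : ((p:ℝ) + 1) ≠ 0 := by positivity
  field_simp

lemma head_neg (p : ℕ) (hp : 1 ≤ p) (xs : Fin p → ℝ) (α : ℝ) (hα : α < 0) :
    Tendsto (fun x => attnOut p xs α x / x) atTop (𝓝 0) := by
  set k0 : Fin p := ⟨0, hp⟩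
  set c := xs k0
  set C := ∑ j, |xs j| with hC
  apply squeeze_zero_norm'
    (a := fun x => C * x⁻¹ + Real.exp (α * x * (x - c)))
  · filter_upwards [eventually_gt_atTop 0] with x hx
    have hD := denom_pos p xs α x
    have hnum : |∑ j, xs j * Real.exp (α * x * xs j) + x * Real.exp (α * x ^ 2)| ≤
        (∑ j, |xs j| * Real.exp (α * x * xs j)) + x * Real.exp (α * x ^ 2) := by
      refine (abs_add_le _ _).trans ?_
      gcongr
      · refine (Finset.abs_sum_le_sum_abs _ _).trans ?_
        apply Finset.sum_le_sum
        intro j _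
        rw [abs_mul, abs_of_pos (Real.exp_pos _)]
      · rw [abs_of_pos (by positivity)]
    have h1 : (∑ j, |xs j| * Real.exp (α * x * xs j)) / attnDenom p xs α x ≤ C := by
      rw [div_le_iff₀ hD, hC, Finset.sum_mul]
      apply Finset.sum_le_sum
      intro j _
      exact mul_le_mul_of_nonneg_left (exp_le_denom p xs α x j) (abs_nonneg _)
    have h2 : Real.exp (α * x ^ 2) / attnDenom p xs α x ≤ Real.exp (α * x * (x - c)) := by
      have := exp_le_denom p xs α x k0
      calc Real.exp (α * x ^ 2) / attnDenom p xs α x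
          ≤ Real.exp (α * x ^ 2) / Real.exp (α * x * c) :=
            div_le_div_of_nonneg_left (Real.exp_pos _).le (Real.exp_pos _) this
        _ = Real.exp (α * x * (x - c)) := by
            rw [← Real.exp_sub]; ring_nf
    have habs : ‖attnOut p xs α x / x‖ =
        |∑ j, xs j * Real.exp (α * x * xs j) + x * Real.exp (α * x ^ 2)| /
          (attnDenom p xs α x * x) := by
      unfold attnOut
      rw [div_div, Real.norm_eq_abs, abs_div]
      congr 1
      exact abs_of_pos (by positivity)
    rw [habs]
    rw [div_le_iff₀ (by positivity)]
    calc |∑ j, xs j * Real.exp (α * x * xs j) + x * Real.exp (α * x ^ 2)|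
        ≤ (∑ j, |xs j| * Real.exp (α * x * xs j)) + x * Real.exp (α * x ^ 2) := hnum
      _ ≤ C * attnDenom p xs α x + x * (Real.exp (α * x * (x - c)) * attnDenom p xs α x) := by
          gcongr
          · rw [← div_le_iff₀ hD] at *; exact h1
          · rw [← div_le_iff₀ hD] at *; exact h2
      _ ≤ (C * x⁻¹ + Real.exp (α * x * (x - c))) * (attnDenom p xs α x * x) := by
          rw [add_mul]
          have hxne : x ≠ 0 := hx.ne'
          have : C * x⁻¹ * (attnDenom p xs α x * x) = C * attnDenom p xs α x := by
            field_simp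
          rw [this]
          gcongr ?_ + ?_
          · exact le_refl _
          · nlinarith [denom_pos p xs α x]
  · have := (tendsto_inv_atTop_zero.const_mul C).add (exp_neg_tendsto α c hα)
    simpa using this

lemma head_limit (p : ℕ) (hp : 1 ≤ p) (xs : Fin p → ℝ) (α : ℝ) :
    Tendsto (fun x => attnOut p xs α x / x) atTop
      (𝓝 (if 0 < α then 1 else if α = 0 then ((p:ℝ)+1)⁻¹ else 0)) := by
  rcases lt_trichotomy α 0 with h | h | h
  · rw [if_neg (by linarith), if_neg (by linarith)]
    exact head_neg p hp xs α h
  · subst h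
    rw [if_neg (lt_irrefl 0), if_pos rfl]
    exact head_zero p xs
  · rw [if_pos h]
    exact head_pos p xs α h

lemma multi_limit (p : ℕ) (hp : 1 ≤ p) (xs : Fin p → ℝ) (H : ℕ) (αs ζ : Fin H → ℝ) :
    Tendsto (fun x => multiAttnScalar p xs H αs ζ x / x) atTop
      (𝓝 (∑ h, (if 0 < αs h then 1 else if αs h = 0 then ((p:ℝ)+1)⁻¹ else 0) * ζ h)) := by
  have h := tendsto_finset_sum (f := fun (h : Fin H) (x : ℝ) => attnOut p xs (αs h) x / x * ζ h)
    Finset.univ (fun h _ => (head_limit p hp xs (αs h)).mul_const (ζ h))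
  apply h.congr
  intro x
  unfold multiAttnScalar
  rw [Finset.sum_div]
  exact Finset.sum_congr rfl fun h _ => by ring

lemma sum_ite_eq (p H : ℕ) (αs ζ : Fin H → ℝ) :
    ∑ h, (if 0 < αs h then 1 else if αs h = 0 then ((p:ℝ)+1)⁻¹ else 0) * ζ h =
      (∑ h ∈ Finset.univ.filter fun h => 0 < αs h, ζ h) +
        ((p : ℝ) + 1)⁻¹ * ∑ h ∈ Finset.univ.filter fun h => αs h = 0, ζ h := by
  rw [Finset.sum_filter, Finset.sum_filter, Finset.mul_sum, ← Finset.sum_add_distrib]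
  apply Finset.sum_congr rfl
  intro h _
  split_ifs with hP hQ
  · linarith
  · ring
  · ring
  · ring

theorem stmt_15 (p : ℕ) (hp : 1 ≤ p) (xs : Fin p → ℝ) (H : ℕ) (hH : 1 ≤ H)
    (αs : Fin H → ℝ) (ζ : Fin H → ℝ) (A : ℝ)
    (hA : A = (∑ h ∈ Finset.univ.filter fun h => 0 < αs h, ζ h) +
      ((p : ℝ) + 1)⁻¹ * ∑ h ∈ Finset.univ.filter fun h => αs h = 0, ζ h) :
    ∀ a : ℝ, a ≠ A → ∀ b : ℝ,
      Filter.Tendsto (fun x : ℝ => |multiAttnScalar p xs H αs ζ x - (a * x + b)|)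
        Filter.atTop Filter.atTop ∧
      ∀ ε > 0, ∃ x₀ : ℝ, ∀ x ≥ x₀, ε < |multiAttnScalar p xs H αs ζ x - (a * x + b)| := by
  intro a ha b
  have hA2 : Tendsto (fun x => multiAttnScalar p xs H αs ζ x / x) atTop (𝓝 A) := by
    rw [hA, ← sum_ite_eq p H αs ζ]
    exact multi_limit p hp xs H αs ζ
  have hg : Tendsto (fun x => multiAttnScalar p xs H αs ζ x / x - a - b * x⁻¹) atTop
      (𝓝 (A - a)) := by
    have := (hA2.sub (tendsto_const_nhds (x := a) (f := atTop))).sub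
      (tendsto_inv_atTop_zero.const_mul b)
    simpa using this
  have hpos : 0 < |A - a| := abs_pos.mpr (sub_ne_zero.mpr (Ne.symm ha))
  have hmul : Tendsto (fun x : ℝ =>
      x * |multiAttnScalar p xs H αs ζ x / x - a - b * x⁻¹|) atTop atTop :=
    tendsto_id.atTop_mul_pos hpos hg.abs
  have h1 : Tendsto (fun x : ℝ => |multiAttnScalar p xs H αs ζ x - (a * x + b)|)
      atTop atTop := by
    apply Tendsto.congr' _ hmul
    filter_upwards [eventually_gt_atTop 0] with x hx
    have h2 : x * |multiAttnScalar p xs H αs ζ x / x - a - b * x⁻¹| =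
        |x * (multiAttnScalar p xs H αs ζ x / x - a - b * x⁻¹)| := by
      rw [abs_mul, abs_of_pos hx]
    rw [h2]
    congr 1
    field_simp
    ring
  refine ⟨h1, fun ε hε => ?_⟩
  rcases eventually_atTop.mp (h1.eventually_gt_atTop ε) with ⟨x₀, hx₀⟩
  exact ⟨x₀, hx₀⟩
end
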